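/- Let G be a graph and {A_i}_{i=1}^k a k-way partition of V. Then max_i Φ_G(A_i) ≥ ρ(k) ≥ λ_k / 2, where ρ(k) is the k-way expansion and λ_k is the k-th smallest eigenvalue of the normalized Laplacian. Consequently, if disjoint nonempty sets C_1, ..., C_k each satisfy Φ_G(C_i) < λ_k/2, we reach a contradiction; i.e., no k-way partition can have all parts of conductance below λ_k/2. -/

import Mathlib

open Finset

noncomputable def deg {n : ℕ} (w : Fin n → Fin n → ℝ) (u : Fin n) : ℝ := ∑ v, w u v

noncomputable def volw {n : ℕ} (w : Fin n → Fin n → ℝ) (S : Finset (Fin n)) : ℝ :=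
  ∑ u ∈ S, deg w u

noncomputable def cutw {n : ℕ} (w : Fin n → Fin n → ℝ) (S T : Finset (Fin n)) : ℝ :=
  ∑ u ∈ S, ∑ v ∈ T, w u v

open Matrix in
open scoped RealInnerProductSpace in
lemma eigen_lower_aux {n m : ℕ} (L : Matrix (Fin n) (Fin n) ℝ)
    (v : Fin m → EuclideanSpace ℝ (Fin n)) (hON : Orthonormal ℝ v)
    (mu : Fin m → ℝ) (lam : ℝ) (hmu : ∀ j, lam ≤ mu j)
    (hev : ∀ j, (WithLp.toLp 2 (L *ᵥ (v j)) : EuclideanSpace ℝ (Fin n)) = mu j • v j)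
    (b : Fin m → ℝ) (x : EuclideanSpace ℝ (Fin n)) (hx : ∑ j, b j • v j = x) :
    lam * ⟪x, x⟫ ≤ ⟪x, (WithLp.toLp 2 (L *ᵥ x) : EuclideanSpace ℝ (Fin n))⟫ := by
  have hLx : (WithLp.toLp 2 (L *ᵥ x) : EuclideanSpace ℝ (Fin n)) = ∑ j, (mu j * b j) • v j := by
    rw [← hx]
    have h1 : (WithLp.toLp 2 (L *ᵥ (∑ j, b j • v j : EuclideanSpace ℝ (Fin n))) : EuclideanSpace ℝ (Fin n))
        = ∑ j, (WithLp.toLp 2 (L *ᵥ (b j • v j : EuclideanSpace ℝ (Fin n))) : EuclideanSpace ℝ (Fin n)) := by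
      rw [WithLp.ofLp_sum, Matrix.mulVec_sum, WithLp.toLp_sum]
    rw [h1]
    refine Finset.sum_congr rfl fun j _ => ?_
    rw [show (WithLp.toLp 2 (L *ᵥ (b j • v j : EuclideanSpace ℝ (Fin n))) : EuclideanSpace ℝ (Fin n))
        = b j • (WithLp.toLp 2 (L *ᵥ (v j)) : EuclideanSpace ℝ (Fin n)) from
          congrArg (WithLp.toLp 2) (Matrix.mulVec_smul L (b j) (v j).ofLp), hev j,
      smul_smul, mul_comm (b j) (mu j)]
  have h2 : ⟪x, (WithLp.toLp 2 (L *ᵥ x) : EuclideanSpace ℝ (Fin n))⟫ = ∑ j, b j * (mu j * b j) := by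
    rw [hLx, ← hx]
    simpa using hON.inner_sum b (fun j => mu j * b j) univ
  have h3 : ⟪x, x⟫ = ∑ j, b j * b j := by
    rw [← hx]
    simpa using hON.inner_sum b b univ
  rw [h2, h3, Finset.mul_sum]
  refine Finset.sum_le_sum fun j _ => ?_
  nlinarith [hmu j, sq_nonneg (b j)]

lemma euclid_sum_apply {n m : ℕ} (f : Fin m → EuclideanSpace ℝ (Fin n))
    (s : Finset (Fin m)) (u : Fin n) :
    (∑ i ∈ s, f i) u = ∑ i ∈ s, f i u := by
  induction s using Finset.cons_induction with
  | empty => rfl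
  | cons a s ha ih => rw [Finset.sum_cons, Finset.sum_cons, PiLp.add_apply, ih]

open Matrix in
open scoped RealInnerProductSpace in
lemma euclid_inner_eq {n : ℕ} (x y : EuclideanSpace ℝ (Fin n)) :
    ⟪x, y⟫ = ∑ u, x u * y u := by
  simp [PiLp.inner_apply, RCLike.inner_apply, conj_trivial]
  exact Finset.sum_congr rfl fun _ _ => mul_comm _ _

open Matrix in
open scoped RealInnerProductSpace in
lemma comb_quad {n k : ℕ} (w : Fin n → Fin n → ℝ)
    (hsymm : ∀ u v, w u v = w v u) (hnonneg : ∀ u v, 0 ≤ w u v)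
    (hdeg : ∀ u, 0 < deg w u)
    (L : Matrix (Fin n) (Fin n) ℝ)
    (hL : L = 1 - Matrix.of (fun u v =>
      w u v / (Real.sqrt (deg w u) * Real.sqrt (deg w v))))
    (part : Fin n → Fin k) (c : Fin k → ℝ) (x : EuclideanSpace ℝ (Fin n))
    (hxu : ∀ u, x u = c (part u) * Real.sqrt (deg w u)) :
    ⟪x, (WithLp.toLp 2 (L *ᵥ x) : EuclideanSpace ℝ (Fin n))⟫ ≤
      2 * ∑ i, c i ^ 2 *
        ∑ u ∈ univ.filter (fun u => part u = i),
          ∑ t ∈ univ.filter (fun t => ¬ part t = i), w u t := by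
  have hs : ∀ u, Real.sqrt (deg w u) ≠ 0 := fun u => ne_of_gt (Real.sqrt_pos.mpr (hdeg u))
  have hss : ∀ u, Real.sqrt (deg w u) * Real.sqrt (deg w u) = deg w u :=
    fun u => Real.mul_self_sqrt (le_of_lt (hdeg u))
  -- step 1: expand mulVec
  have hmv : ∀ u, (WithLp.toLp 2 (L *ᵥ x) : EuclideanSpace ℝ (Fin n)) u
      = x u - ∑ t, w u t / (Real.sqrt (deg w u) * Real.sqrt (deg w t)) * x t := by
    intro u
    show (∑ t, L u t * x t) = _
    rw [hL]
    simp only [Matrix.sub_apply, Matrix.one_apply, Matrix.of_apply, sub_mul, ite_mul, one_mul,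
      zero_mul, Finset.sum_sub_distrib, Finset.sum_ite_eq, mem_univ, if_true]
  -- step 2: Q as a double sum
  have hQ : ⟪x, (WithLp.toLp 2 (L *ᵥ x) : EuclideanSpace ℝ (Fin n))⟫
      = ∑ u, ∑ t, w u t * (c (part u) ^ 2 - c (part u) * c (part t)) := by
    rw [euclid_inner_eq]
    refine Finset.sum_congr rfl fun u _ => ?_
    rw [hmv u, mul_sub, Finset.mul_sum]
    have h1 : x u * x u = ∑ t, w u t * c (part u) ^ 2 := by
      have e0 : x u * x u = deg w u * c (part u) ^ 2 := by
        rw [hxu u]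
        linear_combination c (part u) ^ 2 * hss u
      rw [e0]
      show (∑ t, w u t) * c (part u) ^ 2 = _
      rw [Finset.sum_mul]
    have h2 : ∀ t, x u * (w u t / (Real.sqrt (deg w u) * Real.sqrt (deg w t)) * x t)
        = w u t * (c (part u) * c (part t)) := by
      intro t
      rw [hxu u, hxu t]
      have e1 : c (part u) * Real.sqrt (deg w u) *
          (w u t / (Real.sqrt (deg w u) * Real.sqrt (deg w t)) *
            (c (part t) * Real.sqrt (deg w t)))
          = w u t * (Real.sqrt (deg w u) / Real.sqrt (deg w u)) *
            (Real.sqrt (deg w t) / Real.sqrt (deg w t)) *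
            (c (part u) * c (part t)) := by ring
      rw [e1, div_self (hs u), div_self (hs t)]
      ring
    rw [h1]
    rw [← Finset.sum_sub_distrib]
    refine Finset.sum_congr rfl fun t _ => ?_
    rw [h2 t]
    ring
  rw [hQ]
  -- step 3: pointwise bound
  have hbound : ∑ u, ∑ t, w u t * (c (part u) ^ 2 - c (part u) * c (part t))
      ≤ ∑ u, ∑ t, (if part u = part t then 0 else w u t) *
          ((3/2) * c (part u) ^ 2 + (1/2) * c (part t) ^ 2) := by
    refine Finset.sum_le_sum fun u _ => Finset.sum_le_sum fun t _ => ?_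
    by_cases h : part u = part t
    · rw [if_pos h, h]
      nlinarith [sq_nonneg (c (part t))]
    · rw [if_neg h]
      nlinarith [mul_nonneg (hnonneg u t) (sq_nonneg (c (part u) + c (part t))),
        hnonneg u t]
  refine le_trans hbound ?_
  -- step 4: symmetrize
  have hsym2 : ∑ u, ∑ t, (if part u = part t then 0 else w u t) * c (part t) ^ 2
      = ∑ u, ∑ t, (if part u = part t then 0 else w u t) * c (part u) ^ 2 := by
    rw [Finset.sum_comm]
    refine Finset.sum_congr rfl fun u _ => Finset.sum_congr rfl fun t _ => ?_
    by_cases h : part u = part t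
    · rw [if_pos h, if_pos h.symm]
    · rw [if_neg h, if_neg (fun hh => h hh.symm), hsymm]
  have hexpand : ∑ u, ∑ t, (if part u = part t then 0 else w u t) *
          ((3/2) * c (part u) ^ 2 + (1/2) * c (part t) ^ 2)
      = (∑ u, ∑ t, (if part u = part t then 0 else w u t) * c (part u) ^ 2) * (3/2)
        + (∑ u, ∑ t, (if part u = part t then 0 else w u t) * c (part t) ^ 2) * (1/2) := by
    rw [Finset.sum_mul, Finset.sum_mul, ← Finset.sum_add_distrib]
    refine Finset.sum_congr rfl fun u _ => ?_
    rw [Finset.sum_mul, Finset.sum_mul, ← Finset.sum_add_distrib]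
    exact Finset.sum_congr rfl fun t _ => by ring
  rw [hexpand, hsym2]
  have hfiber : ∑ u, ∑ t, (if part u = part t then 0 else w u t) * c (part u) ^ 2
      = ∑ i, c i ^ 2 *
        ∑ u ∈ univ.filter (fun u => part u = i),
          ∑ t ∈ univ.filter (fun t => ¬ part t = i), w u t := by
    rw [← Finset.sum_fiberwise_of_maps_to (g := part)
      (fun u _ => mem_univ (part u))
      (fun u => ∑ t, (if part u = part t then 0 else w u t) * c (part u) ^ 2)]
    refine Finset.sum_congr rfl fun i _ => ?_
    rw [Finset.mul_sum]
    refine Finset.sum_congr rfl fun u hu => ?_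
    have hpu : part u = i := (Finset.mem_filter.mp hu).2
    rw [Finset.sum_filter, Finset.mul_sum]
    refine Finset.sum_congr rfl fun t _ => ?_
    by_cases h : part t = i
    · rw [if_pos (hpu.trans h.symm), if_neg (not_not_intro h)]
      ring
    · rw [if_neg (fun hh : part u = part t => h (hh.symm.trans hpu)), if_pos h]
      rw [hpu]; ring
  rw [hfiber]
  linarith [hfiber]

open Matrix in
open scoped RealInnerProductSpace in
lemma norm_decomp {n k : ℕ} (w : Fin n → Fin n → ℝ)
    (hdeg : ∀ u, 0 < deg w u)
    (part : Fin n → Fin k) (c : Fin k → ℝ) (x : EuclideanSpace ℝ (Fin n))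
    (hxu : ∀ u, x u = c (part u) * Real.sqrt (deg w u)) :
    ⟪x, x⟫ = ∑ i, c i ^ 2 * ∑ u ∈ univ.filter (fun u => part u = i), deg w u := by
  rw [euclid_inner_eq]
  have h1 : ∀ u, x u * x u = c (part u) ^ 2 * deg w u := by
    intro u
    rw [hxu u]
    nlinarith [Real.mul_self_sqrt (le_of_lt (hdeg u))]
  rw [← Finset.sum_fiberwise_of_maps_to (g := part) (fun u _ => mem_univ (part u))
    (fun u => x u * x u)]
  refine Finset.sum_congr rfl fun i _ => ?_
  rw [Finset.mul_sum]
  refine Finset.sum_congr rfl fun u hu => ?_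
  have hpu : part u = i := (Finset.mem_filter.mp hu).2
  rw [h1 u, hpu]

open Matrix in
open scoped RealInnerProductSpace in
/-- For any k-way partition `A_1, ..., A_k` of the vertex set of
`G`, `max_i Φ_G(A_i) ≥ ρ(k) ≥ λ_k / 2`, where `λ_k` is the `k`-th smallest
eigenvalue of the normalized Laplacian; i.e. some part `A_i` has conductance at
least `λ_k / 2`.  Consequently no k-way partition can have all parts of
conductance below `λ_k / 2`. -/
theorem exists_part_conductance_ge_lambda_div_two
    (n k : ℕ) (hk : 0 < k) (hkn : k ≤ n)
    (w : Fin n → Fin n → ℝ)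
    (hsymm : ∀ u v, w u v = w v u)
    (hnonneg : ∀ u v, 0 ≤ w u v)
    (hself : ∀ u, w u u = 0)
    (hdeg : ∀ u, 0 < deg w u)
    (L : Matrix (Fin n) (Fin n) ℝ)
    (hL : L = 1 - Matrix.of (fun u v =>
      w u v / (Real.sqrt (deg w u) * Real.sqrt (deg w v))))
    (hHerm : L.IsHermitian)
    (lam : ℝ)
    -- `lam` is the k-th smallest eigenvalue of the normalized Laplacian
    (hlam : lam = hHerm.eigenvalues (Tuple.sort hHerm.eigenvalues ⟨k - 1, by omega⟩))
    (A : Fin k → Finset (Fin n))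
    (hne : ∀ i, (A i).Nonempty)
    (hdisj : ∀ i j, i ≠ j → Disjoint (A i) (A j))
    (hcover : ∀ v : Fin n, ∃ i, v ∈ A i) :
    ∃ i, lam / 2 ≤ cutw w (A i) (A i)ᶜ / volw w (A i) := by
  by_contra hcon
  push_neg at hcon
  classical
  -- the partition function
  set part : Fin n → Fin k := fun u => (hcover u).choose with hpartdef
  have hpart : ∀ u, u ∈ A (part u) := fun u => (hcover u).choose_spec
  have hmem : ∀ i u, u ∈ A i ↔ part u = i := by
    intro i u
    constructor
    · intro hu
      by_contra h
      exact Finset.disjoint_left.mp (hdisj (part u) i h) (hpart u) hu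
    · intro h; exact h ▸ hpart u
  have hAfilter : ∀ i, A i = univ.filter (fun u => part u = i) := by
    intro i; ext u; simp [hmem i u]
  -- the indicator family
  set g : Fin k → EuclideanSpace ℝ (Fin n) :=
    fun i => (WithLp.toLp 2 (fun u => if part u = i then Real.sqrt (deg w u) else 0) :
      EuclideanSpace ℝ (Fin n)) with hgdef
  have hs : ∀ u, Real.sqrt (deg w u) ≠ 0 := fun u => ne_of_gt (Real.sqrt_pos.mpr (hdeg u))
  have hgapply : ∀ i u, g i u = if part u = i then Real.sqrt (deg w u) else 0 :=
    fun i u => rfl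
  have hgsum : ∀ (c : Fin k → ℝ) (u : Fin n),
      (∑ i, c i • g i) u = c (part u) * Real.sqrt (deg w u) := by
    intro c u
    rw [euclid_sum_apply]
    have : ∀ i, (c i • g i) u = if part u = i then c i * Real.sqrt (deg w u) else 0 := by
      intro i
      rw [PiLp.smul_apply, hgapply]
      by_cases h : part u = i <;> simp [h]
    calc (∑ i, (c i • g i) u) = ∑ i, if part u = i then c i * Real.sqrt (deg w u) else 0 :=
          Finset.sum_congr rfl fun i _ => this i
      _ = c (part u) * Real.sqrt (deg w u) := by
          rw [Finset.sum_ite_eq]; simp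
  have hgLI : LinearIndependent ℝ g := by
    rw [Fintype.linearIndependent_iff]
    intro c hc i
    obtain ⟨u, hu⟩ := hne i
    have hpu : part u = i := (hmem i u).mp hu
    have h2 : (∑ i, c i • g i) u = 0 := by rw [hc]; rfl
    rw [hgsum c u] at h2
    have h0 : c (part u) = 0 := by
      rcases mul_eq_zero.mp h2 with h | h
      · exact h
      · exact absurd h (hs u)
    rwa [hpu] at h0
  -- the eigenvector family
  set σ : Equiv.Perm (Fin n) := Tuple.sort hHerm.eigenvalues with hσdef
  set m : ℕ := n + 1 - k with hmdef
  have hm : k + m = n + 1 := by omega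
  set e : Fin m → Fin n := fun j => ⟨k - 1 + j.val, by omega⟩ with hedef
  have he : Function.Injective e := by
    intro a b hab
    have : k - 1 + a.val = k - 1 + b.val := congrArg Fin.val hab
    exact Fin.ext (by omega)
  set v : Fin m → EuclideanSpace ℝ (Fin n) :=
    fun j => hHerm.eigenvectorBasis (σ (e j)) with hvdef
  have hONv : Orthonormal ℝ v :=
    (hHerm.eigenvectorBasis.orthonormal).comp _ (σ.injective.comp he)
  -- dimension counting
  set U : Submodule ℝ (EuclideanSpace ℝ (Fin n)) := Submodule.span ℝ (Set.range g) with hUdef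
  set W : Submodule ℝ (EuclideanSpace ℝ (Fin n)) := Submodule.span ℝ (Set.range v) with hWdef
  have hfU : Module.finrank ℝ U = k := by
    rw [hUdef, finrank_span_eq_card hgLI, Fintype.card_fin]
  have hfW : Module.finrank ℝ W = m := by
    rw [hWdef, finrank_span_eq_card hONv.linearIndependent, Fintype.card_fin]
  have hsum : Module.finrank ℝ ↥(U ⊔ W) + Module.finrank ℝ ↥(U ⊓ W)
      = Module.finrank ℝ U + Module.finrank ℝ W :=
    Submodule.finrank_sup_add_finrank_inf_eq U W
  have hle : Module.finrank ℝ ↥(U ⊔ W) ≤ n := by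
    have := Submodule.finrank_le (U ⊔ W)
    rwa [finrank_euclideanSpace_fin] at this
  have hpos : 0 < Module.finrank ℝ ↥(U ⊓ W) := by
    rw [hfU, hfW] at hsum
    omega
  obtain ⟨y, hy0⟩ := Module.finrank_pos_iff_exists_ne_zero.mp hpos
  obtain ⟨x, hxUW⟩ := y
  have hxne : x ≠ 0 := by
    intro h
    exact hy0 (Subtype.ext h)
  have hxU : x ∈ U := hxUW.1
  have hxW : x ∈ W := hxUW.2
  obtain ⟨c, hc⟩ := (Submodule.mem_span_range_iff_exists_fun ℝ).mp hxU
  obtain ⟨b, hb⟩ := (Submodule.mem_span_range_iff_exists_fun ℝ).mp hxW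
  have hxu : ∀ u, x u = c (part u) * Real.sqrt (deg w u) := by
    intro u
    rw [← hc, hgsum c u]
  -- eigen lower bound
  set mu : Fin m → ℝ := fun j => hHerm.eigenvalues (σ (e j)) with hmudef
  have hmu : ∀ j, lam ≤ mu j := by
    intro j
    rw [hlam]
    have hmono := Tuple.monotone_sort hHerm.eigenvalues
    have hle2 : (⟨k - 1, by omega⟩ : Fin n) ≤ e j := by
      rw [hedef]
      exact Fin.mk_le_mk.mpr (Nat.le_add_right _ _)
    exact hmono hle2
  have hev : ∀ j, (WithLp.toLp 2 (L *ᵥ (v j)) : EuclideanSpace ℝ (Fin n)) = mu j • v j :=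
    fun j => by rw [hHerm.mulVec_eigenvectorBasis (σ (e j))]; rfl
  have hlower := eigen_lower_aux L v hONv mu lam hmu hev b x hb
  have hupper := comb_quad w hsymm hnonneg hdeg L hL part c x hxu
  have hnorm := norm_decomp w hdeg part c x hxu
  -- translate filters back to A i
  have hcutA : ∀ i, cutw w (A i) (A i)ᶜ
      = ∑ u ∈ univ.filter (fun u => part u = i),
          ∑ t ∈ univ.filter (fun t => ¬ part t = i), w u t := by
    intro i
    rw [cutw, hAfilter i]
    refine Finset.sum_congr rfl fun u _ => ?_
    refine Finset.sum_congr ?_ fun t _ => rfl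
    ext t
    simp [hmem i t]
  have hvolA : ∀ i, volw w (A i)
      = ∑ u ∈ univ.filter (fun u => part u = i), deg w u := by
    intro i
    rw [volw, hAfilter i]
  -- positivity of volumes and strict inequality
  have hvolpos : ∀ i, 0 < volw w (A i) := by
    intro i
    exact Finset.sum_pos (fun u _ => hdeg u) (hne i)
  have hcutlt : ∀ i, cutw w (A i) (A i)ᶜ < lam / 2 * volw w (A i) := by
    intro i
    have := hcon i
    rwa [div_lt_iff₀ (hvolpos i)] at this
    -- gives cutw < lam/2 * volw
  -- some coefficient is nonzero
  obtain ⟨u0, hu0⟩ : ∃ u, x u ≠ 0 := by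
    by_contra h
    push_neg at h
    exact hxne (PiLp.ext h)
  have hc0 : c (part u0) ≠ 0 := by
    intro h
    apply hu0
    rw [hxu u0, h, zero_mul]
  -- strict comparison
  have hstrict : ∑ i, c i ^ 2 * cutw w (A i) (A i)ᶜ
      < ∑ i, c i ^ 2 * (lam / 2 * volw w (A i)) := by
    refine Finset.sum_lt_sum (fun i _ => ?_) ⟨part u0, mem_univ _, ?_⟩
    · exact mul_le_mul_of_nonneg_left (le_of_lt (hcutlt i)) (sq_nonneg _)
    · exact mul_lt_mul_of_pos_left (hcutlt (part u0)) (sq_pos_of_ne_zero hc0)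
  -- put everything together
  have hQup : (2 : ℝ) * ∑ i, c i ^ 2 * cutw w (A i) (A i)ᶜ
      = 2 * ∑ i, c i ^ 2 *
        ∑ u ∈ univ.filter (fun u => part u = i),
          ∑ t ∈ univ.filter (fun t => ¬ part t = i), w u t := by
    congr 1
    exact Finset.sum_congr rfl fun i _ => by rw [hcutA i]
  have hNA : ∑ i, c i ^ 2 * volw w (A i)
      = ∑ i, c i ^ 2 * ∑ u ∈ univ.filter (fun u => part u = i), deg w u :=
    Finset.sum_congr rfl fun i _ => by rw [hvolA i]
  have final : lam * ∑ i, c i ^ 2 * volw w (A i)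
      ≤ 2 * ∑ i, c i ^ 2 * cutw w (A i) (A i)ᶜ := by
    rw [hQup, hNA]
    calc lam * ∑ i, c i ^ 2 * ∑ u ∈ univ.filter (fun u => part u = i), deg w u
        = lam * ⟪x, x⟫ := by rw [hnorm]
      _ ≤ _ := le_trans hlower hupper
  have : lam * ∑ i, c i ^ 2 * volw w (A i) < lam * ∑ i, c i ^ 2 * volw w (A i) := by
    calc lam * ∑ i, c i ^ 2 * volw w (A i)
        ≤ 2 * ∑ i, c i ^ 2 * cutw w (A i) (A i)ᶜ := final
      _ < 2 * ∑ i, c i ^ 2 * (lam / 2 * volw w (A i)) := by linarith [hstrict]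
      _ = lam * ∑ i, c i ^ 2 * volw w (A i) := by
          rw [Finset.mul_sum, Finset.mul_sum]
          exact Finset.sum_congr rfl fun i _ => by ring
  exact lt_irrefl _ this
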